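/- Let $R$ be a Noetherian ring and $I$ an ideal such that the extended Rees algebra $S = \oplus_{n\geq 0} \overline{I^n}$ of integral closures is Noetherian. Suppose there exists $k \geq 1$ with $\overline{I^{nk}} = (\overline{I^k})^n$ for all $n \geq 1$. Then there exists a constant $e \geq 0$ such that $\overline{I^m} \subseteq I^{m - e}$ for all $m \geq e$; in particular the filtrations $\{\overline{I^n}\}$ and $\{I^n\}$ are cofinal. -/

import Mathlib

/-- The integral closure of an ideal `I`: the ideal of all elements `x` satisfying an
equation of integral dependence `xⁿ + a₁ xⁿ⁻¹ + ⋯ + aₙ = 0` with `aᵢ ∈ Iⁱ`.  (The set of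
such elements is already an ideal, so taking the span does not change it.) -/
def idealIntCl {R : Type*} [CommRing R] (I : Ideal R) : Ideal R :=
  Ideal.span {x : R | ∃ n : ℕ, 0 < n ∧ ∃ a : ℕ → R,
    (∀ i, 1 ≤ i → i ≤ n → a i ∈ I ^ i) ∧
    x ^ n + ∑ i ∈ Finset.Icc 1 n, a i * x ^ (n - i) = 0}

/-- The graded ring `⊕ₙ Iₙ` associated to a multiplicative decreasing filtration of
ideals of `R` with `I 0 = R`, realized as the subalgebra of `R[X]` consisting of the
polynomials whose `n`-th coefficient lies in `I n`. -/
def filtRees (R : Type*) [CommRing R] (I : ℕ → Ideal R)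
    (hmul : ∀ m n, I m * I n ≤ I (m + n)) (h0 : I 0 = ⊤) :
    Subalgebra R (Polynomial R) where
  carrier := {p | ∀ n, p.coeff n ∈ I n}
  add_mem' := fun {p q} hp hq n => by
    simpa [Polynomial.coeff_add] using (I n).add_mem (hp n) (hq n)
  mul_mem' := fun {p q} hp hq n => by
    rw [Polynomial.coeff_mul]
    refine Submodule.sum_mem _ fun c hc => ?_
    replace hc : c.1 + c.2 = n := by simpa using hc
    have h := Ideal.mul_mem_mul (hp c.1) (hq c.2)
    exact hc ▸ hmul c.1 c.2 h
  algebraMap_mem' := fun r n => by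
    rcases Nat.eq_zero_or_pos n with h | h
    · subst h
      simp [h0]
    · simp [Polynomial.coeff_C, Nat.pos_iff_ne_zero.mp h]

open Polynomial

namespace IntClAux

variable {R : Type*} [CommRing R]

lemma intCl_mono {I₁ I₂ : Ideal R} (h : I₁ ≤ I₂) : idealIntCl I₁ ≤ idealIntCl I₂ := by
  apply Ideal.span_mono
  rintro x ⟨n, hn, a, ha, heq⟩
  exact ⟨n, hn, a, fun i h1 h2 => Ideal.pow_right_mono h i (ha i h1 h2), heq⟩

lemma monomial_mem_integralClosure (I : Ideal R) (m : ℕ) {x : R}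
    (hx : x ∈ idealIntCl (I ^ m)) :
    (monomial m x : R[X]) ∈ integralClosure ↥(reesAlgebra I) R[X] := by
  refine Submodule.span_induction ?_ ?_ ?_ ?_ hx
  · rintro x ⟨ν, hν, a, ha, heq⟩
    set b : ℕ → R := fun i => if 1 ≤ i ∧ i ≤ ν then a i else 0 with hb
    have hbmem : ∀ i, b i ∈ I ^ (m * i) := by
      intro i
      rw [hb]
      dsimp only
      split_ifs with h
      · rw [pow_mul]; exact ha i h.1 h.2
      · exact zero_mem _
    have heq' : x ^ ν + ∑ i ∈ Finset.Icc 1 ν, b i * x ^ (ν - i) = 0 := by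
      rw [← heq]
      congr 1
      refine Finset.sum_congr rfl fun i hi => ?_
      rw [Finset.mem_Icc] at hi
      rw [hb]
      simp [hi.1, hi.2]
    have hmono : ∀ i, (monomial (m * i) (b i) : R[X]) ∈ reesAlgebra I := by
      intro i
      rw [mem_reesAlgebra_iff]
      intro d
      rw [coeff_monomial]
      split_ifs with h
      · exact h ▸ hbmem i
      · exact zero_mem _
    obtain ⟨ν', rfl⟩ : ∃ ν', ν = ν' + 1 := ⟨ν - 1, (Nat.succ_pred_eq_of_pos hν).symm⟩
    refine ⟨X ^ (ν' + 1) + ∑ i ∈ Finset.Icc 1 (ν' + 1),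
      C (⟨monomial (m * i) (b i), hmono i⟩ : ↥(reesAlgebra I)) * X ^ (ν' + 1 - i), ?_, ?_⟩
    · apply monic_X_pow_add
      refine lt_of_le_of_lt (degree_sum_le _ _) ?_
      rw [Finset.sup_lt_iff (by exact_mod_cast WithBot.bot_lt_coe (ν' + 1))]
      intro i hi
      rw [Finset.mem_Icc] at hi
      refine lt_of_le_of_lt (degree_C_mul_X_pow_le _ _) ?_
      exact_mod_cast Nat.sub_lt_of_pos_le hi.1 hi.2
    · rw [eval₂_add, eval₂_pow, eval₂_X, eval₂_finset_sum]
      have key : ∀ i ∈ Finset.Icc 1 (ν' + 1),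
          eval₂ (algebraMap ↥(reesAlgebra I) R[X]) (monomial m x)
            (C (⟨monomial (m * i) (b i), hmono i⟩ : ↥(reesAlgebra I)) * X ^ (ν' + 1 - i)) =
          monomial (m * (ν' + 1)) (b i * x ^ (ν' + 1 - i)) := by
        intro i hi
        rw [Finset.mem_Icc] at hi
        rw [eval₂_mul, eval₂_C, eval₂_pow, eval₂_X]
        have : (algebraMap ↥(reesAlgebra I) R[X]) ⟨monomial (m * i) (b i), hmono i⟩ =
            monomial (m * i) (b i) := rfl
        rw [this, monomial_pow, monomial_mul_monomial, ← Nat.mul_add,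
          Nat.add_sub_cancel' hi.2]
      rw [Finset.sum_congr rfl key, monomial_pow, ← map_sum (monomial (m * (ν' + 1))),
        ← map_add (monomial (m * (ν' + 1))), heq', monomial_zero_right]
  · simpa using (integralClosure ↥(reesAlgebra I) R[X]).zero_mem
  · intro p q _ _ hp hq
    rw [map_add]
    exact add_mem hp hq
  · intro r y _ hy
    rw [smul_eq_mul, ← C_mul_monomial]
    have hC : (C r : R[X]) ∈ reesAlgebra I := (reesAlgebra I).algebraMap_mem r
    have : (C r : R[X]) = algebraMap ↥(reesAlgebra I) R[X] ⟨C r, hC⟩ := rfl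
    exact mul_mem (this ▸ (integralClosure ↥(reesAlgebra I) R[X]).algebraMap_mem ⟨C r, hC⟩) hy

lemma sum_le {ι : Type*} (s : Finset ι) (f : ι → Ideal R) (V : Submodule R R)
    (h : ∀ i ∈ s, f i ≤ V) : (∑ i ∈ s, f i) ≤ V := by
  classical
  induction s using Finset.induction_on with
  | empty => rw [Finset.sum_empty, Submodule.zero_eq_bot]; exact bot_le
  | insert a s' hx ih =>
    rw [Finset.sum_insert hx, Submodule.add_eq_sup]
    exact sup_le (h a (Finset.mem_insert_self _ _))
      (ih fun i hi => h i (Finset.mem_insert_of_mem hi))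

end IntClAux

/-- Let `R` be Noetherian and `I` an ideal such that the Rees algebra
`S = ⊕ₙ (integral closure of Iⁿ)` is Noetherian.  Suppose there is `k ≥ 1` with
`cl(Iⁿᵏ) = (cl(Iᵏ))ⁿ` for all `n ≥ 1`.  Then there is a constant `e` such that
`cl(Iᵐ) ⊆ I^{m-e}` for all `m ≥ e`; in particular the filtrations `{cl(Iⁿ)}` and `{Iⁿ}`
are cofinal. -/
theorem intCl_filtration_cofinal {R : Type*} [CommRing R] [IsNoetherianRing R]
    (I : Ideal R)
    (hmul : ∀ m n, idealIntCl (I ^ m) * idealIntCl (I ^ n) ≤ idealIntCl (I ^ (m + n)))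
    (h0 : idealIntCl (I ^ 0) = ⊤)
    (hS : IsNoetherianRing (filtRees R (fun n => idealIntCl (I ^ n)) hmul h0))
    (k : ℕ) (hk : 1 ≤ k)
    (hpow : ∀ n : ℕ, 1 ≤ n → idealIntCl (I ^ (n * k)) = idealIntCl (I ^ k) ^ n) :
    (∃ e : ℕ, ∀ m : ℕ, e ≤ m → idealIntCl (I ^ m) ≤ I ^ (m - e)) ∧
      ∀ j : ℕ, ∃ n : ℕ, idealIntCl (I ^ n) ≤ I ^ j := by
  classical
  have hJanti : ∀ {a b : ℕ}, a ≤ b → idealIntCl (I ^ b) ≤ idealIntCl (I ^ a) :=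
    fun h => IntClAux.intCl_mono (Ideal.pow_le_pow_right h)
  set S := filtRees R (fun n => idealIntCl (I ^ n)) hmul h0 with hSdef
  have hmemS : ∀ p : R[X], p ∈ S ↔ ∀ n, p.coeff n ∈ idealIntCl (I ^ n) := fun p => Iff.rfl
  have hmonS : ∀ (n : ℕ) (x : R), x ∈ idealIntCl (I ^ n) → (monomial n x : R[X]) ∈ S := by
    intro n x hx
    rw [hmemS]
    intro d
    rw [coeff_monomial]
    split_ifs with h
    · exact h ▸ hx
    · exact zero_mem _
  set cfun : ℕ → Ideal ↥S := fun n => Ideal.span {s : ↥S | ∃ m : ℕ, 1 ≤ m ∧ m ≤ n ∧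
      ∃ x ∈ idealIntCl (I ^ m), (s : R[X]) = monomial m x} with hcfun
  have hc_mono : Monotone cfun := by
    intro a b hab
    apply Ideal.span_mono
    rintro s ⟨m, h1, h2, hx⟩
    exact ⟨m, h1, h2.trans hab, hx⟩
  obtain ⟨N, hN⟩ := monotone_stabilizes_iff_noetherian.mpr hS ⟨cfun, hc_mono⟩
  have hN' : ∀ m, N ≤ m → cfun N = cfun m := fun m hm => hN m hm
  set K : ℕ → Ideal R := fun d => ∑ m ∈ Finset.Icc 1 N,
    idealIntCl (I ^ (d - m)) * idealIntCl (I ^ m) with hK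
  have hKle : ∀ i j : ℕ, idealIntCl (I ^ i) * K j ≤ K (i + j) := by
    intro i j
    rw [hK]
    dsimp only
    rw [Finset.mul_sum]
    refine Finset.sum_le_sum fun m hm => ?_
    rw [← mul_assoc]
    refine Ideal.mul_mono ?_ le_rfl
    refine le_trans (hmul i (j - m)) (hJanti ?_)
    omega
  have claimA : ∀ s : ↥S, s ∈ cfun N → ∀ d, (s : R[X]).coeff d ∈ K d := by
    intro s hs
    refine Submodule.span_induction ?_ ?_ ?_ ?_ hs
    · rintro t ⟨m, hm1, hmN, x, hx, ht⟩ d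
      rw [ht, coeff_monomial]
      split_ifs with h
      · subst h
        have hterm : idealIntCl (I ^ (m - m)) * idealIntCl (I ^ m) ≤ K m :=
          Finset.single_le_sum
            (f := fun m' => idealIntCl (I ^ (m - m')) * idealIntCl (I ^ m'))
            (fun i _ => bot_le) (Finset.mem_Icc.mpr ⟨hm1, hmN⟩)
        apply hterm
        rw [Nat.sub_self, h0, Ideal.top_mul]
        exact hx
      · exact zero_mem _
    · intro d
      simpa using zero_mem (K d)
    · intro p q _ _ hp hq d
      have h : ((p + q : ↥S) : R[X]) = (p : R[X]) + (q : R[X]) := rfl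
      rw [h, coeff_add]
      exact add_mem (hp d) (hq d)
    · intro a t _ hP d
      rw [smul_eq_mul]
      have h : ((a * t : ↥S) : R[X]) = (a : R[X]) * (t : R[X]) := rfl
      rw [h, coeff_mul]
      refine Submodule.sum_mem _ fun c hc => ?_
      rw [Finset.HasAntidiagonal.mem_antidiagonal] at hc
      have h1 : (a : R[X]).coeff c.1 ∈ idealIntCl (I ^ c.1) := a.2 c.1
      exact hc ▸ hKle c.1 c.2 (Ideal.mul_mem_mul h1 (hP c.2))
  have claimB : ∀ d, N < d → idealIntCl (I ^ d) ≤ K d := by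
    intro d hd x hx
    have h1 : (⟨monomial d x, hmonS d x hx⟩ : ↥S) ∈ cfun d :=
      Ideal.subset_span ⟨d, by omega, le_rfl, x, hx, rfl⟩
    rw [← hN' d hd.le] at h1
    have h2 := claimA _ h1 d
    simpa [coeff_monomial] using h2
  choose F hF using fun m => IsNoetherian.noetherian (idealIntCl (I ^ m))
  set G : Finset R[X] :=
    (Finset.Icc 1 N).biUnion (fun m => (F m).image fun x => (monomial m x : R[X])) with hG
  have hGint : ∀ g ∈ (G : Set R[X]), IsIntegral ↥(reesAlgebra I) g := by
    intro g hg
    rw [Finset.mem_coe, hG, Finset.mem_biUnion] at hg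
    obtain ⟨m, _, hg⟩ := hg
    rw [Finset.mem_image] at hg
    obtain ⟨x, hxF, rfl⟩ := hg
    have hx : x ∈ idealIntCl (I ^ m) := by
      rw [← hF m]
      exact Submodule.subset_span hxF
    exact IntClAux.monomial_mem_integralClosure I m hx
  set T := Algebra.adjoin ↥(reesAlgebra I) (G : Set R[X]) with hT
  have hTfg : (Subalgebra.toSubmodule T).FG := fg_adjoin_of_finite G.finite_toSet hGint
  have hCT : ∀ r : R, (C r : R[X]) ∈ T := by
    intro r
    have hC : (C r : R[X]) ∈ reesAlgebra I := (reesAlgebra I).algebraMap_mem r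
    have h : algebraMap ↥(reesAlgebra I) R[X] ⟨C r, hC⟩ = C r := rfl
    rw [← h]
    exact T.algebraMap_mem _
  have claimC : ∀ n : ℕ, ∀ x ∈ idealIntCl (I ^ n), (monomial n x : R[X]) ∈ T := by
    intro n
    induction n using Nat.strong_induction_on with
    | _ n ih =>
    intro x hx
    by_cases hn0 : n = 0
    · subst hn0
      rw [monomial_zero_left]
      exact hCT x
    by_cases hnN : n ≤ N
    · rw [← hF n] at hx
      refine Submodule.span_induction ?_ ?_ ?_ ?_ hx
      · intro y hy
        apply Algebra.subset_adjoin
        exact Finset.mem_coe.mpr (Finset.mem_biUnion.mpr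
          ⟨n, Finset.mem_Icc.mpr ⟨by omega, hnN⟩,
            Finset.mem_image.mpr ⟨y, Finset.mem_coe.mp hy, rfl⟩⟩)
      · simpa using T.zero_mem
      · intro p q _ _ hp hq
        rw [map_add]
        exact add_mem hp hq
      · intro r y _ hy
        rw [smul_eq_mul, ← C_mul_monomial]
        exact mul_mem (hCT r) hy
    · push_neg at hnN
      have hxK : x ∈ K n := claimB n hnN hx
      set V : Submodule R R :=
        { carrier := {y | (monomial n y : R[X]) ∈ T}
          add_mem' := fun {a b} ha hb => by
            simp only [Set.mem_setOf_eq] at *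
            rw [map_add]
            exact add_mem ha hb
          zero_mem' := by
            simp only [Set.mem_setOf_eq, monomial_zero_right]
            exact T.zero_mem
          smul_mem' := fun r y hy => by
            simp only [Set.mem_setOf_eq] at *
            rw [smul_eq_mul, ← C_mul_monomial]
            exact mul_mem (hCT r) hy } with hV
      have hle : K n ≤ V := by
        refine IntClAux.sum_le _ _ _ ?_
        intro m hm
        rw [Finset.mem_Icc] at hm
        rw [Ideal.mul_le]
        intro y hy z hz
        show (monomial n (y * z) : R[X]) ∈ T
        have hsub : n - m + m = n := Nat.sub_add_cancel (by omega)
        rw [← hsub, ← monomial_mul_monomial]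
        exact mul_mem (ih (n - m) (by omega) y hy) (ih m (by omega) z hz)
      exact hle hxK
  obtain ⟨Fs, hFs⟩ := hTfg
  set D := Fs.sup (fun f => f.natDegree) with hD
  have bound : ∀ p ∈ Submodule.span ↥(reesAlgebra I) (Fs : Set R[X]),
      ∀ d, p.coeff d ∈ I ^ (d - D) := by
    intro p hp
    refine Submodule.span_induction ?_ ?_ ?_ ?_ hp
    · intro f hf d
      by_cases hdeg : f.natDegree < d
      · rw [coeff_eq_zero_of_natDegree_lt hdeg]
        exact zero_mem _
      · have hfD : f.natDegree ≤ D := Finset.le_sup (Finset.mem_coe.mp hf)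
        have hd0 : d - D = 0 := by omega
        rw [hd0, pow_zero, Ideal.one_eq_top]
        exact Submodule.mem_top
    · intro d
      simpa using zero_mem _
    · intro p q _ _ hp hq d
      rw [coeff_add]
      exact add_mem (hp d) (hq d)
    · intro a p _ hp d
      have h : (a • p : R[X]) = (a : R[X]) * p := rfl
      rw [h, coeff_mul]
      refine Submodule.sum_mem _ fun c hc => ?_
      rw [Finset.HasAntidiagonal.mem_antidiagonal] at hc
      have h1 : (a : R[X]).coeff c.1 ∈ I ^ c.1 := a.2 c.1
      have h3 : I ^ c.1 * I ^ (c.2 - D) ≤ I ^ (d - D) := by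
        rw [← pow_add]
        exact Ideal.pow_le_pow_right (by omega)
      exact h3 (Ideal.mul_mem_mul h1 (hp c.2))
  have main : ∀ m : ℕ, D ≤ m → idealIntCl (I ^ m) ≤ I ^ (m - D) := by
    intro m hm x hx
    have h1 : (monomial m x : R[X]) ∈ T := claimC m x hx
    have h2 : (monomial m x : R[X]) ∈ Submodule.span ↥(reesAlgebra I) (Fs : Set R[X]) := by
      rw [hFs]
      exact h1
    have h3 := bound _ h2 m
    simpa [coeff_monomial] using h3
  refine ⟨⟨D, main⟩, fun j => ⟨D + j, ?_⟩⟩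
  have h := main (D + j) (Nat.le_add_right _ _)
  simpa using h
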